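/- Let (h,[-,-]_h) be a Lie algebra and let D̄(h) = {D ∈ Der(h) : [Du,v]_h = 0 for all u,v ∈ h} be the coherent derivation Lie algebra. Equip the direct sum vector space D̄(h) ⊕ h with the direct sum Lie bracket [(A,u),(B,v)] = ([A,B],[u,v]_h), and define ρ : D̄(h) → gl(D̄(h) ⊕ h) by ρ(A)(B,v) = (0, Av). Then ρ is a coherent action of the Lie algebra D̄(h) on the Lie algebra D̄(h) ⊕ h, and the projection pr : D̄(h) ⊕ h → D̄(h), pr(A,u) = A, is a nonabelian embedding tensor on D̄(h) with respect to (D̄(h) ⊕ h; ρ). -/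

import Mathlib

variable {k : Type*} [Field k]
variable {h : Type*} [LieRing h] [LieAlgebra k h]

/-- A coherent derivation of the Lie algebra `h`: a derivation `D` with `[Du,v] = 0`
for all `u, v`. -/
def IsCoherentDer (D : Module.End k h) : Prop :=
  (∀ u v : h, D ⁅u, v⁆ = ⁅D u, v⁆ + ⁅u, D v⁆) ∧ ∀ u v : h, ⁅D u, v⁆ = (0 : h)

/-- The direct sum Lie bracket on `D̄(h) ⊕ h` (elements modelled as pairs in
`Module.End k h × h`): `[(A,u),(B,v)] = ([A,B],[u,v])`. -/
def dsBracket (p q : Module.End k h × h) : Module.End k h × h :=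
  (⁅p.1, q.1⁆, ⁅p.2, q.2⁆)

/-- The map `ρ : D̄(h) → gl(D̄(h) ⊕ h)`, `ρ(A)(B,v) = (0, Av)`. -/
def dsRho (A : Module.End k h) (p : Module.End k h × h) : Module.End k h × h :=
  (0, A p.2)

/-- `ρ(A)(B,v) = (0, Av)` is a coherent action of the coherent derivation Lie
algebra `D̄(h)` on the direct sum Lie algebra `D̄(h) ⊕ h`, and the projection
`pr(A,u) = A` is a nonabelian embedding tensor on `D̄(h)` with respect to this action. -/
theorem projection_nonabelianEmbeddingTensor :
    -- each ρ(A) is a derivation of the direct sum Lie algebra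
    (∀ A : Module.End k h, IsCoherentDer A → ∀ p q : Module.End k h × h,
      dsRho A (dsBracket p q) = dsBracket (dsRho A p) q + dsBracket p (dsRho A q)) ∧
    -- ρ is a Lie algebra homomorphism
    (∀ A B : Module.End k h, IsCoherentDer A → IsCoherentDer B →
      ∀ p : Module.End k h × h,
        dsRho ⁅A, B⁆ p = dsRho A (dsRho B p) - dsRho B (dsRho A p)) ∧
    -- the action is coherent: [ρ(A)p, q] = 0
    (∀ A : Module.End k h, IsCoherentDer A → ∀ p q : Module.End k h × h,
      dsBracket (dsRho A p) q = 0) ∧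
    -- pr is a nonabelian embedding tensor: [pr p, pr q] = pr(ρ(pr p)q + [p,q])
    (∀ p q : Module.End k h × h, IsCoherentDer p.1 → IsCoherentDer q.1 →
      ⁅p.1, q.1⁆ = (dsRho p.1 q + dsBracket p q).1) := by
  refine ⟨?_, ?_, ?_, ?_⟩
  · intro A hA p q
    simp [dsRho, dsBracket, Prod.ext_iff, hA.1 p.2 q.2, LieRing.of_associative_ring_bracket]
  · intro A B _ _ p
    simp [dsRho, Prod.ext_iff, LieRing.of_associative_ring_bracket]
  · intro A hA p q
    simp [dsRho, dsBracket, Prod.ext_iff, hA.2, LieRing.of_associative_ring_bracket]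
  · intro p q _ _
    simp [dsRho, dsBracket]
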